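/- Delayed-contraction sup estimate: Let λ ∈ (0,1), δ ≥ 0 with λ^B > δ, and suppose nonnegative sequences u, v satisfy u(k+1) ≤ δ·u(k+1-B) + ∑_{t=1}^{B} v(k+1-t) for all k ≥ B-1, with u(j)=v(j) given for j ≤ B-1 (and v(j)=0 for j<0). Then for all K, sup_{0≤k≤K} λ^{-k} u(k) ≤ [ (∑_{t=1}^B λ^{-t}) / (1 - δ/λ^B) ] · sup_{0≤k≤K} λ^{-k} v(k) + [ λ^B/(λ^B - δ) ] · ∑_{t=1}^{B} λ^{1-t} u(t-1). -/

import Mathlib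

/-- Delayed-contraction sup estimate. -/
theorem delayed_contraction_sup (B : ℕ) (hB : 1 ≤ B) (lam δ : ℝ)
    (hδ0 : 0 ≤ δ) (hδ1 : δ < 1) (hlam1 : lam < 1) (hlam0 : 0 < lam)
    (hgap : δ < lam ^ B)
    (u v : ℕ → ℝ) (hu : ∀ k, 0 ≤ u k) (hv : ∀ k, 0 ≤ v k)
    (hrec : ∀ k : ℕ, B - 1 ≤ k →
      u (k + 1) ≤ δ * u (k + 1 - B) + ∑ t ∈ Finset.Icc 1 B, v (k + 1 - t)) :
    ∀ K : ℕ,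
      (⨆ k : Fin (K + 1), lam ^ (-((k : ℕ) : ℤ)) * u k)
        ≤ ((∑ t ∈ Finset.Icc 1 B, lam ^ (-(t : ℤ))) / (1 - δ / lam ^ B)) *
            (⨆ k : Fin (K + 1), lam ^ (-((k : ℕ) : ℤ)) * v k)
          + (lam ^ B / (lam ^ B - δ)) *
            ∑ t ∈ Finset.Icc 1 B, lam ^ ((1 : ℤ) - (t : ℤ)) * u (t - 1) := by
  intro K
  have hlamne : lam ≠ 0 := ne_of_gt hlam0
  have hlamB : (0:ℝ) < lam ^ B := pow_pos hlam0 B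
  have hfrac : δ / lam ^ B < 1 := (div_lt_one hlamB).2 hgap
  have hden : 0 < 1 - δ / lam ^ B := by linarith
  have hgappos : 0 < lam ^ B - δ := by linarith
  have hbdd : ∀ f : Fin (K+1) → ℝ, BddAbove (Set.range f) := fun f =>
    (Set.finite_range f).bddAbove
  set P : ℝ := ∑ t ∈ Finset.Icc 1 B, lam ^ (-(t : ℤ)) with hP
  set I : ℝ := ∑ t ∈ Finset.Icc 1 B, lam ^ ((1:ℤ) - (t:ℤ)) * u (t-1) with hI
  set Su : ℝ := ⨆ k : Fin (K + 1), lam ^ (-((k : ℕ) : ℤ)) * u k with hSu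
  set Sv : ℝ := ⨆ k : Fin (K + 1), lam ^ (-((k : ℕ) : ℤ)) * v k with hSv
  have hzpow : ∀ n : ℤ, (0:ℝ) < lam ^ n := fun n => zpow_pos hlam0 n
  have hSu0 : 0 ≤ Su := by
    have h1 : lam ^ (-((((0 : Fin (K+1)) : ℕ)) : ℤ)) * u ((0 : Fin (K+1)) : ℕ) ≤ Su := by
      rw [hSu]
      exact le_ciSup (f := fun k : Fin (K+1) => lam ^ (-((k:ℕ):ℤ)) * u ↑k) (hbdd _) 0
    have h2 : 0 ≤ lam ^ (-((((0 : Fin (K+1)) : ℕ)) : ℤ)) * u ((0 : Fin (K+1)) : ℕ) :=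
      mul_nonneg (hzpow _).le (hu _)
    linarith
  have hSv0 : 0 ≤ Sv := by
    have h1 : lam ^ (-((((0 : Fin (K+1)) : ℕ)) : ℤ)) * v ((0 : Fin (K+1)) : ℕ) ≤ Sv := by
      rw [hSv]
      exact le_ciSup (f := fun k : Fin (K+1) => lam ^ (-((k:ℕ):ℤ)) * v ↑k) (hbdd _) 0
    have h2 : 0 ≤ lam ^ (-((((0 : Fin (K+1)) : ℕ)) : ℤ)) * v ((0 : Fin (K+1)) : ℕ) :=
      mul_nonneg (hzpow _).le (hv _)
    linarith
  have hP0 : 0 ≤ P := Finset.sum_nonneg fun t _ => (hzpow _).le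
  have hI0 : 0 ≤ I := Finset.sum_nonneg fun t _ => mul_nonneg (hzpow _).le (hu _)
  have hsplit : ∀ t k : ℕ, t ≤ k →
      lam ^ (-(k : ℤ)) = lam ^ (-(t : ℤ)) * lam ^ (-((k - t : ℕ) : ℤ)) := by
    intro t k htk
    rw [← zpow_add₀ hlamne]
    congr 1
    omega
  have key : ∀ k : Fin (K+1), lam ^ (-((k:ℕ):ℤ)) * u k ≤
      (δ / lam ^ B) * Su + (P * Sv + I) := by
    intro k
    rcases lt_or_ge (k:ℕ) B with hk | hk
    · -- small indices: bounded by I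
      have h1 : lam ^ (-((k:ℕ):ℤ)) * u k ≤ I := by
        rw [hI]
        have hmem : (k:ℕ) + 1 ∈ Finset.Icc 1 B := by
          simp only [Finset.mem_Icc]
          omega
        have hs := Finset.single_le_sum
          (f := fun t : ℕ => lam ^ ((1:ℤ) - (t:ℤ)) * u (t-1))
          (fun t _ => mul_nonneg (hzpow _).le (hu _)) hmem
        have he : lam ^ ((1:ℤ) - (((k:ℕ)+1 : ℕ):ℤ)) * u (((k:ℕ)+1 - 1 : ℕ))
            = lam ^ (-((k:ℕ):ℤ)) * u k := by
          have h1 : (1:ℤ) - ((((k:ℕ)+1 : ℕ)):ℤ) = -((k:ℕ):ℤ) := by omega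
          have h2 : ((k:ℕ)+1 - 1 : ℕ) = (k:ℕ) := by omega
          rw [h1, h2]
        simpa only [he] using hs
      have h2 : 0 ≤ (δ / lam ^ B) * Su + P * Sv :=
        add_nonneg (mul_nonneg (div_nonneg hδ0 hlamB.le) hSu0) (mul_nonneg hP0 hSv0)
      linarith
    · -- large indices: use the recursion
      obtain ⟨m, hm⟩ : ∃ m, (k:ℕ) = m + 1 := ⟨(k:ℕ) - 1, by omega⟩
      have hrec' := hrec m (by omega)
      rw [← hm] at hrec'
      have hBk : ((k:ℕ) - B : ℕ) < K + 1 := by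
        have := k.isLt; omega
      have hSuB : lam ^ (-(((k:ℕ) - B : ℕ) : ℤ)) * u ((k:ℕ) - B) ≤ Su := by
        rw [hSu]
        exact le_ciSup (f := fun k : Fin (K+1) => lam ^ (-((k:ℕ):ℤ)) * u ↑k)
          (hbdd _) (⟨(k:ℕ) - B, hBk⟩ : Fin (K+1))
      have hsum : ∀ t ∈ Finset.Icc 1 B,
          lam ^ (-((k:ℕ):ℤ)) * v ((k:ℕ) - t) ≤ lam ^ (-(t:ℤ)) * Sv := by
        intro t ht
        simp only [Finset.mem_Icc] at ht
        have htk : t ≤ (k:ℕ) := by omega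
        have hkt : ((k:ℕ) - t : ℕ) < K + 1 := by have := k.isLt; omega
        have hv' : lam ^ (-(((k:ℕ) - t : ℕ) : ℤ)) * v ((k:ℕ) - t) ≤ Sv := by
          rw [hSv]
          exact le_ciSup (f := fun k : Fin (K+1) => lam ^ (-((k:ℕ):ℤ)) * v ↑k)
            (hbdd _) (⟨(k:ℕ) - t, hkt⟩ : Fin (K+1))
        calc lam ^ (-((k:ℕ):ℤ)) * v ((k:ℕ) - t)
            = lam ^ (-(t:ℤ)) * (lam ^ (-(((k:ℕ) - t : ℕ) : ℤ)) * v ((k:ℕ) - t)) := by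
              rw [hsplit t (k:ℕ) htk]; ring
          _ ≤ lam ^ (-(t:ℤ)) * Sv :=
              mul_le_mul_of_nonneg_left hv' (hzpow _).le
      calc lam ^ (-((k:ℕ):ℤ)) * u (k:ℕ)
          ≤ lam ^ (-((k:ℕ):ℤ)) *
              (δ * u ((k:ℕ) - B) + ∑ t ∈ Finset.Icc 1 B, v ((k:ℕ) - t)) :=
            mul_le_mul_of_nonneg_left hrec' (hzpow _).le
        _ = δ * (lam ^ (-((k:ℕ):ℤ)) * u ((k:ℕ) - B))
              + ∑ t ∈ Finset.Icc 1 B, lam ^ (-((k:ℕ):ℤ)) * v ((k:ℕ) - t) := by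
            rw [mul_add, Finset.mul_sum]; ring
        _ ≤ δ * (lam ^ (-(B:ℤ)) * (lam ^ (-(((k:ℕ) - B : ℕ) : ℤ)) * u ((k:ℕ) - B)))
              + ∑ t ∈ Finset.Icc 1 B, lam ^ (-(t:ℤ)) * Sv := by
            apply add_le_add
            · rw [hsplit B (k:ℕ) hk, mul_assoc]
            · exact Finset.sum_le_sum hsum
        _ ≤ δ * (lam ^ (-(B:ℤ)) * Su) + ∑ t ∈ Finset.Icc 1 B, lam ^ (-(t:ℤ)) * Sv := by
            apply add_le_add_left
            apply mul_le_mul_of_nonneg_left _ hδ0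
            exact mul_le_mul_of_nonneg_left hSuB (hzpow _).le
        _ = (δ / lam ^ B) * Su + P * Sv := by
            rw [← Finset.sum_mul, ← hP]
            congr 1
            rw [zpow_neg, zpow_natCast]
            field_simp
        _ ≤ (δ / lam ^ B) * Su + (P * Sv + I) := by linarith
  have hmain : Su ≤ (δ / lam ^ B) * Su + (P * Sv + I) := by
    rw [hSu]; exact ciSup_le key
  have h2 : (1 - δ / lam ^ B) * Su ≤ P * Sv + I := by nlinarith [hmain]
  have h3 : Su ≤ (P * Sv + I) / (1 - δ / lam ^ B) :=
    (le_div_iff₀ hden).2 (by linarith [h2])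
  have hEq : (P * Sv + I) / (1 - δ / lam ^ B)
      = (P / (1 - δ / lam ^ B)) * Sv + (lam ^ B / (lam ^ B - δ)) * I := by
    have h1 : 1 - δ / lam ^ B = (lam ^ B - δ) / lam ^ B := by
      field_simp
    rw [h1]
    field_simp
  rw [hEq] at h3
  exact h3
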